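/- Let Q be symmetric positive definite, J : ℝⁿ → ℝ^{n×n} with J(z)ᵀ = -J(z), and suppose z ↦ J(z)Q is Lipschitz with constant L w.r.t. the Q-norm on the ball B(y₀; 2‖y₀‖_Q). Then Φ_h(x) = C((h/2)J((y₀+x)/2)Q)y₀ satisfies ‖Φ_h(x) - Φ_h(x')‖_Q ≤ (h L ‖y₀‖_Q / 2)·‖x - x'‖_Q for all x, x' in that ball. -/

import Mathlib

open Matrix

/-- The `Q`-norm of a vector, `‖x‖_Q = √(xᵀ Q x)`. -/
noncomputable def qnorm {n : ℕ} (Q : Matrix (Fin n) (Fin n) ℝ) (x : Fin n → ℝ) : ℝ :=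
  Real.sqrt (x ⬝ᵥ Q.mulVec x)

/-- The operator norm on `ℝ^{n×n}` induced by the `Q`-norm. -/
noncomputable def qOpNorm {n : ℕ} (Q M : Matrix (Fin n) (Fin n) ℝ) : ℝ :=
  sInf {c : ℝ | 0 ≤ c ∧ ∀ x : Fin n → ℝ, qnorm Q (M.mulVec x) ≤ c * qnorm Q x}

/-- The Cayley transform `C(A) = (I - A)⁻¹ (I + A)`. -/
noncomputable def cayley {n : ℕ} (A : Matrix (Fin n) (Fin n) ℝ) : Matrix (Fin n) (Fin n) ℝ :=
  (1 - A)⁻¹ * (1 + A)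

/-- The midpoint-rule fixed point map `Φ_h(x) = C((h/2) J((y₀+x)/2) Q) y₀`. -/
noncomputable def Phi {n : ℕ} (Q : Matrix (Fin n) (Fin n) ℝ)
    (J : (Fin n → ℝ) → Matrix (Fin n) (Fin n) ℝ) (y₀ : Fin n → ℝ) (h : ℝ)
    (x : Fin n → ℝ) : Fin n → ℝ :=
  (cayley ((h / 2) • (J ((1 / 2 : ℝ) • (y₀ + x)) * Q))).mulVec y₀

section Aux

variable {n : ℕ} {Q : Matrix (Fin n) (Fin n) ℝ}

lemma qnorm_nonneg (Q : Matrix (Fin n) (Fin n) ℝ) (x : Fin n → ℝ) : 0 ≤ qnorm Q x :=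
  Real.sqrt_nonneg _

lemma qnorm_zero (Q : Matrix (Fin n) (Fin n) ℝ) : qnorm Q 0 = 0 := by
  simp [qnorm]

lemma qnorm_smul (Q : Matrix (Fin n) (Fin n) ℝ) (c : ℝ) (x : Fin n → ℝ) :
    qnorm Q (c • x) = |c| * qnorm Q x := by
  unfold qnorm
  have h1 : (c • x) ⬝ᵥ Q.mulVec (c • x) = c ^ 2 * (x ⬝ᵥ Q.mulVec x) := by
    rw [Matrix.mulVec_smul, smul_dotProduct, dotProduct_smul]
    simp [smul_eq_mul]; ring
  rw [h1, Real.sqrt_mul (sq_nonneg c), Real.sqrt_sq_eq_abs]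

lemma qnorm_dot_nonneg (hQ : Q.PosDef) (x : Fin n → ℝ) : 0 ≤ x ⬝ᵥ Q.mulVec x := by
  have := hQ.posSemidef.dotProduct_mulVec_nonneg x
  simpa using this

lemma qnorm_eq_zero_iff (hQ : Q.PosDef) {x : Fin n → ℝ} : qnorm Q x = 0 ↔ x = 0 := by
  constructor
  · intro hx
    by_contra hne
    have hpos : 0 < x ⬝ᵥ Q.mulVec x := by simpa using hQ.dotProduct_mulVec_pos hne
    have := Real.sqrt_pos.mpr hpos
    rw [qnorm] at hx
    linarith
  · rintro rfl; exact qnorm_zero Q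

lemma qnorm_sq (hQ : Q.PosDef) (x : Fin n → ℝ) :
    qnorm Q x ^ 2 = x ⬝ᵥ Q.mulVec x := by
  rw [qnorm, Real.sq_sqrt (qnorm_dot_nonneg hQ x)]

/-- symmetry of the Q-bilinear form -/
lemma qdot_symm (hQt : Qᵀ = Q) (x y : Fin n → ℝ) :
    x ⬝ᵥ Q.mulVec y = y ⬝ᵥ Q.mulVec x := by
  rw [Matrix.dotProduct_mulVec, ← Matrix.mulVec_transpose, hQt, dotProduct_comm]

lemma skew_quad {B : Matrix (Fin n) (Fin n) ℝ} (hB : Bᵀ = -B) (c : ℝ) (u : Fin n → ℝ) :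
    ((c • (B * Q)).mulVec u) ⬝ᵥ Q.mulVec u = 0 := by
  set w := Q.mulVec u with hw
  have h1 : (c • (B * Q)).mulVec u = c • B.mulVec w := by
    rw [smul_mulVec, ← Matrix.mulVec_mulVec]
  rw [h1, smul_dotProduct, smul_eq_mul]
  have key : (B.mulVec w) ⬝ᵥ w = 0 := by
    have h2 : (B.mulVec w) ⬝ᵥ w = w ⬝ᵥ B.mulVec w := dotProduct_comm _ _
    have h3 : w ⬝ᵥ B.mulVec w = (Bᵀ.mulVec w) ⬝ᵥ w := by
      rw [Matrix.dotProduct_mulVec, ← Matrix.mulVec_transpose]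
    have h4 : (Bᵀ.mulVec w) ⬝ᵥ w = -((B.mulVec w) ⬝ᵥ w) := by
      rw [hB, Matrix.neg_mulVec, neg_dotProduct]
    have := h2.trans (h3.trans h4)
    linarith
  rw [key, mul_zero]

/-- expansion of the `(1 - A)` quadratic form for `Q`-skew `A`. -/
lemma one_sub_expand {A : Matrix (Fin n) (Fin n) ℝ} (hQt : Qᵀ = Q)
    (hA : ∀ u : Fin n → ℝ, (A.mulVec u) ⬝ᵥ Q.mulVec u = 0) (u : Fin n → ℝ) :
    ((1 - A).mulVec u) ⬝ᵥ Q.mulVec ((1 - A).mulVec u)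
      = u ⬝ᵥ Q.mulVec u + (A.mulVec u) ⬝ᵥ Q.mulVec (A.mulVec u) := by
  have h0 : (1 - A).mulVec u = u - A.mulVec u := by
    rw [Matrix.sub_mulVec, Matrix.one_mulVec]
  have hcross : u ⬝ᵥ Q.mulVec (A.mulVec u) = 0 := by
    rw [qdot_symm hQt]; exact hA u
  rw [h0, sub_dotProduct, Matrix.mulVec_sub, dotProduct_sub, dotProduct_sub,
    hcross, hA u]
  ring

lemma qnorm_le_one_sub {A : Matrix (Fin n) (Fin n) ℝ} (hQ : Q.PosDef)
    (hA : ∀ u : Fin n → ℝ, (A.mulVec u) ⬝ᵥ Q.mulVec u = 0) (u : Fin n → ℝ) :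
    qnorm Q u ≤ qnorm Q ((1 - A).mulVec u) := by
  have hQt : Qᵀ = Q := by
    ext i j
    have := congrFun (congrFun hQ.isHermitian.eq i) j
    simpa [Matrix.conjTranspose_apply] using this
  apply Real.sqrt_le_sqrt
  rw [one_sub_expand hQt hA u]
  have := qnorm_dot_nonneg hQ (A.mulVec u)
  linarith

lemma isUnit_one_sub {A : Matrix (Fin n) (Fin n) ℝ} (hQ : Q.PosDef)
    (hA : ∀ u : Fin n → ℝ, (A.mulVec u) ⬝ᵥ Q.mulVec u = 0) :
    IsUnit (1 - A) := by
  rw [← Matrix.mulVec_injective_iff_isUnit]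
  intro u v huv
  have h0 : (1 - A).mulVec (u - v) = 0 := by
    rw [Matrix.mulVec_sub, huv, sub_self]
  have h1 : qnorm Q (u - v) ≤ 0 := by
    have := qnorm_le_one_sub hQ hA (u - v)
    rw [h0, qnorm_zero] at this
    exact this
  have h2 : qnorm Q (u - v) = 0 := le_antisymm h1 (qnorm_nonneg Q _)
  have := (qnorm_eq_zero_iff hQ).mp h2
  exact sub_eq_zero.mp this

lemma qnorm_inv_le {A : Matrix (Fin n) (Fin n) ℝ} (hQ : Q.PosDef)
    (hA : ∀ u : Fin n → ℝ, (A.mulVec u) ⬝ᵥ Q.mulVec u = 0) (y : Fin n → ℝ) :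
    qnorm Q ((1 - A)⁻¹.mulVec y) ≤ qnorm Q y := by
  have hU := isUnit_one_sub hQ hA
  have hdet : IsUnit (1 - A).det := (Matrix.isUnit_iff_isUnit_det _).mp hU
  have h1 : (1 - A).mulVec ((1 - A)⁻¹.mulVec y) = y := by
    rw [Matrix.mulVec_mulVec, Matrix.mul_nonsing_inv _ hdet, Matrix.one_mulVec]
  have := qnorm_le_one_sub hQ hA ((1 - A)⁻¹.mulVec y)
  rwa [h1] at this

/-- The Cayley difference identity. -/
lemma cayley_sub {A A' : Matrix (Fin n) (Fin n) ℝ}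
    (hA : IsUnit (1 - A)) (hA' : IsUnit (1 - A')) :
    cayley A - cayley A' = (1 - A)⁻¹ * ((2 : ℝ) • (A - A')) * (1 - A')⁻¹ := by
  have hdA : IsUnit (1 - A).det := (Matrix.isUnit_iff_isUnit_det _).mp hA
  have hdA' : IsUnit (1 - A').det := (Matrix.isUnit_iff_isUnit_det _).mp hA'
  have cancel : ∀ M : Matrix (Fin n) (Fin n) ℝ,
      (1 - A)⁻¹ * ((1 - A) * M * (1 - A')) * (1 - A')⁻¹ = M := by
    intro M
    rw [← Matrix.mul_assoc, ← Matrix.mul_assoc, Matrix.nonsing_inv_mul _ hdA,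
      Matrix.one_mul, Matrix.mul_assoc, Matrix.mul_nonsing_inv _ hdA', Matrix.mul_one]
  have key : (1 - A) * (cayley A - cayley A') * (1 - A') = (2 : ℝ) • (A - A') := by
    have e1 : (1 - A) * cayley A = 1 + A := by
      rw [cayley, ← Matrix.mul_assoc, Matrix.mul_nonsing_inv _ hdA, Matrix.one_mul]
    have comm : (1 + A') * (1 - A') = (1 - A') * (1 + A') := by noncomm_ring
    have e2 : (1 - A) * cayley A' * (1 - A') = (1 - A) * (1 + A') :=
      calc (1 - A) * cayley A' * (1 - A')
          = (1 - A) * ((1 - A')⁻¹ * ((1 + A') * (1 - A'))) := by rw [cayley]; noncomm_ring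
        _ = (1 - A) * ((1 - A')⁻¹ * ((1 - A') * (1 + A'))) := by rw [comm]
        _ = (1 - A) * (((1 - A')⁻¹ * (1 - A')) * (1 + A')) := by noncomm_ring
        _ = (1 - A) * (1 + A') := by rw [Matrix.nonsing_inv_mul _ hdA', Matrix.one_mul]
    have e3 : (1 - A) * (cayley A - cayley A') * (1 - A')
        = ((1 - A) * cayley A) * (1 - A') - (1 - A) * cayley A' * (1 - A') := by
      noncomm_ring
    rw [e3, e1, e2]
    have e4 : (2 : ℝ) • (A - A') = (A - A') + (A - A') := two_smul ℝ (A - A')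
    rw [e4]
    noncomm_ring
  calc cayley A - cayley A'
      = (1 - A)⁻¹ * ((1 - A) * (cayley A - cayley A') * (1 - A')) * (1 - A')⁻¹ :=
        (cancel _).symm
    _ = (1 - A)⁻¹ * ((2 : ℝ) • (A - A')) * (1 - A')⁻¹ := by rw [key]

open scoped Matrix.Norms.L2Operator MatrixOrder in
/-- Every matrix is bounded w.r.t. the `Q`-norm. -/
lemma qnorm_exists_bound (hQ : Q.PosDef) (M : Matrix (Fin n) (Fin n) ℝ) :
    ∃ c : ℝ, 0 ≤ c ∧ ∀ x : Fin n → ℝ, qnorm Q (M.mulVec x) ≤ c * qnorm Q x := by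
  set S := CFC.sqrt Q with hS
  have hSH : Sᵀ = S := by
    have := (Matrix.nonneg_iff_posSemidef.mp (CFC.sqrt_nonneg Q)).isHermitian
    simpa using this.eq
  have hSS : S * S = Q := CFC.sqrt_mul_sqrt_self Q (Matrix.nonneg_iff_posSemidef.mpr hQ.posSemidef)
  have hdet : IsUnit S.det := by
    have h1 : S.det * S.det = Q.det := by rw [← Matrix.det_mul, hSS]
    have h2 : (0 : ℝ) < Q.det := hQ.det_pos
    have : S.det ≠ 0 := by
      intro h
      rw [h, mul_zero] at h1
      exact absurd h1.symm (ne_of_gt h2)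
    exact this.isUnit
  have hq : ∀ x : Fin n → ℝ,
      qnorm Q x = ‖(EuclideanSpace.equiv (Fin n) ℝ).symm (S.mulVec x)‖ := by
    intro x
    have h1 : x ⬝ᵥ Q.mulVec x = (S.mulVec x) ⬝ᵥ (S.mulVec x) := by
      rw [← hSS, ← Matrix.mulVec_mulVec, Matrix.dotProduct_mulVec,
        ← Matrix.mulVec_transpose, hSH]
    rw [qnorm, h1, EuclideanSpace.norm_eq]
    congr 1
    simp [dotProduct, Real.norm_eq_abs, sq_abs, pow_two]
  refine ⟨‖S * M * S⁻¹‖, norm_nonneg _, fun x => ?_⟩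
  have hx : S.mulVec (M.mulVec x) = (S * M * S⁻¹).mulVec (S.mulVec x) := by
    have hcanc : (S * M * S⁻¹) * S = S * M := by
      rw [Matrix.mul_assoc (S * M) S⁻¹ S, Matrix.nonsing_inv_mul _ hdet, Matrix.mul_one]
    rw [Matrix.mulVec_mulVec, Matrix.mulVec_mulVec, hcanc]
  rw [hq, hq, hx]
  exact Matrix.l2_opNorm_mulVec (S * M * S⁻¹) ((EuclideanSpace.equiv (Fin n) ℝ).symm (S.mulVec x))

lemma qOpNorm_nonneg (Q M : Matrix (Fin n) (Fin n) ℝ) : 0 ≤ qOpNorm Q M :=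
  Real.sInf_nonneg (fun _ hc => hc.1)

lemma qnorm_mulVec_le (hQ : Q.PosDef) (M : Matrix (Fin n) (Fin n) ℝ) (x : Fin n → ℝ) :
    qnorm Q (M.mulVec x) ≤ qOpNorm Q M * qnorm Q x := by
  obtain ⟨c, hc0, hc⟩ := qnorm_exists_bound hQ M
  have hne : {c : ℝ | 0 ≤ c ∧ ∀ x : Fin n → ℝ, qnorm Q (M.mulVec x) ≤ c * qnorm Q x}.Nonempty :=
    ⟨c, hc0, hc⟩
  rcases eq_or_ne x 0 with rfl | hx
  · simp [Matrix.mulVec_zero, qnorm_zero]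
  · have hpos : 0 < qnorm Q x := by
      rcases lt_or_eq_of_le (qnorm_nonneg Q x) with h | h
      · exact h
      · exact absurd ((qnorm_eq_zero_iff hQ).mp h.symm) hx
    rw [← div_le_iff₀ hpos] at *
    refine le_csInf hne (fun b hb => ?_)
    rw [div_le_iff₀ hpos]
    exact hb.2 x

end Aux

/-- If `z ↦ J(z)Q` is Lipschitz with constant `L` (w.r.t. the `Q`-norms) on the
ball `B(y₀; 2‖y₀‖_Q)`, then `Φ_h` is Lipschitz there with constant `hL‖y₀‖_Q/2`. -/
theorem stmt17 {n : ℕ} (Q : Matrix (Fin n) (Fin n) ℝ) (hQ : Q.PosDef)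
    (J : (Fin n → ℝ) → Matrix (Fin n) (Fin n) ℝ) (hJ : ∀ z, (J z)ᵀ = -(J z))
    (y₀ : Fin n → ℝ) (h : ℝ) (hh : 0 < h) (L : ℝ)
    (hLip : ∀ z z' : Fin n → ℝ,
      qnorm Q (z - y₀) ≤ 2 * qnorm Q y₀ → qnorm Q (z' - y₀) ≤ 2 * qnorm Q y₀ →
      qOpNorm Q (J z * Q - J z' * Q) ≤ L * qnorm Q (z - z')) :
    ∀ x x' : Fin n → ℝ,
      qnorm Q (x - y₀) ≤ 2 * qnorm Q y₀ → qnorm Q (x' - y₀) ≤ 2 * qnorm Q y₀ →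
      qnorm Q (Phi Q J y₀ h x - Phi Q J y₀ h x') ≤
        (h * L * qnorm Q y₀ / 2) * qnorm Q (x - x') := by
  intro x x' hx hx'
  set z : Fin n → ℝ := (1 / 2 : ℝ) • (y₀ + x) with hz
  set z' : Fin n → ℝ := (1 / 2 : ℝ) • (y₀ + x') with hz'
  set A : Matrix (Fin n) (Fin n) ℝ := (h / 2) • (J z * Q) with hA
  set A' : Matrix (Fin n) (Fin n) ℝ := (h / 2) • (J z' * Q) with hA'
  -- skewness facts
  have hskA : ∀ u : Fin n → ℝ, (A.mulVec u) ⬝ᵥ Q.mulVec u = 0 :=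
    fun u => skew_quad (hJ z) (h / 2) u
  have hskA' : ∀ u : Fin n → ℝ, (A'.mulVec u) ⬝ᵥ Q.mulVec u = 0 :=
    fun u => skew_quad (hJ z') (h / 2) u
  have hUA : IsUnit (1 - A) := isUnit_one_sub hQ hskA
  have hUA' : IsUnit (1 - A') := isUnit_one_sub hQ hskA'
  -- decompose the difference
  have hPhi : Phi Q J y₀ h x - Phi Q J y₀ h x'
      = (1 - A)⁻¹.mulVec (((2 : ℝ) • (A - A')).mulVec ((1 - A')⁻¹.mulVec y₀)) := by
    rw [Phi, Phi, ← hz, ← hz', ← hA, ← hA', ← Matrix.sub_mulVec, cayley_sub hUA hUA',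
      Matrix.mulVec_mulVec, Matrix.mulVec_mulVec]
  set w : Fin n → ℝ := (1 - A')⁻¹.mulVec y₀ with hwdef
  have hw : qnorm Q w ≤ qnorm Q y₀ := qnorm_inv_le hQ hskA' y₀
  -- rewrite the middle matrix
  have hmid : (2 : ℝ) • (A - A') = h • (J z * Q - J z' * Q) := by
    rw [hA, hA', ← smul_sub, smul_smul]
    congr 1
    ring
  -- hypotheses of hLip
  have hzball : qnorm Q (z - y₀) ≤ 2 * qnorm Q y₀ := by
    have hzeq : z - y₀ = (1 / 2 : ℝ) • (x - y₀) := by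
      rw [hz]; module
    rw [hzeq, qnorm_smul]
    have h0 := qnorm_nonneg Q y₀
    rw [abs_of_pos (by norm_num : (0:ℝ) < 1/2)]
    nlinarith [qnorm_nonneg Q (x - y₀)]
  have hz'ball : qnorm Q (z' - y₀) ≤ 2 * qnorm Q y₀ := by
    have hzeq : z' - y₀ = (1 / 2 : ℝ) • (x' - y₀) := by
      rw [hz']; module
    rw [hzeq, qnorm_smul]
    have h0 := qnorm_nonneg Q y₀
    rw [abs_of_pos (by norm_num : (0:ℝ) < 1/2)]
    nlinarith [qnorm_nonneg Q (x' - y₀)]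
  have hzz' : qnorm Q (z - z') = (1 / 2) * qnorm Q (x - x') := by
    have : z - z' = (1 / 2 : ℝ) • (x - x') := by rw [hz, hz']; module
    rw [this, qnorm_smul, abs_of_pos (by norm_num : (0:ℝ) < 1/2)]
  have hLipzz := hLip z z' hzball hz'ball
  -- main estimate
  have hop0 : 0 ≤ qOpNorm Q (J z * Q - J z' * Q) := qOpNorm_nonneg Q _
  have hstep1 : qnorm Q ((J z * Q - J z' * Q).mulVec w)
      ≤ qOpNorm Q (J z * Q - J z' * Q) * qnorm Q w :=
    qnorm_mulVec_le hQ _ w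
  have hstep2 : qOpNorm Q (J z * Q - J z' * Q) * qnorm Q w
      ≤ (L * qnorm Q (z - z')) * qnorm Q y₀ := by
    apply mul_le_mul hLipzz hw (qnorm_nonneg Q w) (le_trans hop0 hLipzz)
  calc qnorm Q (Phi Q J y₀ h x - Phi Q J y₀ h x')
      = qnorm Q ((1 - A)⁻¹.mulVec (((2 : ℝ) • (A - A')).mulVec w)) := by rw [hPhi]
    _ ≤ qnorm Q (((2 : ℝ) • (A - A')).mulVec w) := qnorm_inv_le hQ hskA _
    _ = qnorm Q (h • ((J z * Q - J z' * Q).mulVec w)) := by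
        rw [hmid, smul_mulVec]
    _ = h * qnorm Q ((J z * Q - J z' * Q).mulVec w) := by
        rw [qnorm_smul, abs_of_pos hh]
    _ ≤ h * ((L * qnorm Q (z - z')) * qnorm Q y₀) := by
        exact mul_le_mul_of_nonneg_left (hstep1.trans hstep2) hh.le
    _ = (h * L * qnorm Q y₀ / 2) * qnorm Q (x - x') := by
        rw [hzz']; ring
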